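/- Let 0 < p ≤ 1, q = 1 - p, 0 < a < 1, and let T(L) = ∑_{n=0}^{L-1} ∑_{k=0}^{n} (1/(k+1)^a) C(n,k) p^k q^{n-k}. Then T(L) ≤ (1/p) ∑_{n=0}^{L-1} (1 - q^{n+1})/(n+1)^a ≤ (1/p) ∑_{n=0}^{L-1} 1/(n+1)^a. -/

import Mathlib

open Finset

lemma binom_sum_id (p : ℝ) (hp : 0 < p) (n : ℕ) :
    ∑ k ∈ range (n + 1), (n.choose k : ℝ) * p ^ k * (1 - p) ^ (n - k) / ((k : ℝ) + 1)
      = (1 - (1 - p) ^ (n + 1)) / (((n : ℝ) + 1) * p) := by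
  rw [eq_div_iff (by positivity), sum_mul]
  have hcongr : ∀ k ∈ range (n+1),
      (n.choose k : ℝ) * p ^ k * (1 - p) ^ (n - k) / ((k:ℝ) + 1) * (((n : ℝ) + 1) * p)
        = ((n+1).choose (k+1) : ℝ) * p ^ (k+1) * (1 - p) ^ ((n+1) - (k+1)) := by
    intro k hk
    have h' : ((n:ℝ)+1) * (n.choose k : ℝ) = ((n+1).choose (k+1) : ℝ) * ((k:ℝ)+1) := by
      exact_mod_cast Nat.add_one_mul_choose_eq n k
    have hsub : n + 1 - (k + 1) = n - k := by omega
    rw [hsub]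
    have hk1 : ((k:ℝ)+1) ≠ 0 := by positivity
    field_simp
    linear_combination p ^ (k+1) * (1 - p) ^ (n - k) * h'
  rw [sum_congr rfl hcongr]
  have hbin : ∑ j ∈ range (n+2), p ^ j * (1 - p) ^ ((n+1) - j) * ((n+1).choose j : ℝ) = 1 := by
    rw [← add_pow]
    norm_num
  rw [Finset.sum_range_succ'] at hbin
  simp only [pow_zero, Nat.choose_zero_right, Nat.cast_one, one_mul, mul_one, Nat.sub_zero] at hbin
  have : ∑ k ∈ range (n+1), ((n+1).choose (k+1) : ℝ) * p ^ (k+1) * (1 - p) ^ ((n+1) - (k+1))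
      = ∑ k ∈ range (n+1), p ^ (k+1) * (1 - p) ^ ((n+1) - (k+1)) * ((n+1).choose (k+1) : ℝ) := by
    apply sum_congr rfl; intro k _; ring
  rw [this]
  linarith [hbin]

theorem stmt_14 (p a : ℝ) (hp : 0 < p) (hp1 : p ≤ 1) (ha : 0 < a) (ha1 : a < 1) (L : ℕ) :
    (∑ n ∈ range L, ∑ k ∈ range (n + 1),
        (1 / ((k : ℝ) + 1) ^ a) * (n.choose k : ℝ) * p ^ k * (1 - p) ^ (n - k))
      ≤ (1 / p) * ∑ n ∈ range L, (1 - (1 - p) ^ (n + 1)) / ((n : ℝ) + 1) ^ a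
    ∧ (1 / p) * ∑ n ∈ range L, (1 - (1 - p) ^ (n + 1)) / ((n : ℝ) + 1) ^ a
      ≤ (1 / p) * ∑ n ∈ range L, 1 / ((n : ℝ) + 1) ^ a := by
  have hq : 0 ≤ 1 - p := by linarith
  constructor
  · rw [mul_sum]
    apply sum_le_sum
    intro n _
    -- inner bound
    have hnp : (0:ℝ) < (n:ℝ) + 1 := by positivity
    have key : ∀ k ∈ range (n+1),
        (1 / ((k : ℝ) + 1) ^ a) * (n.choose k : ℝ) * p ^ k * (1 - p) ^ (n - k)
          ≤ ((n:ℝ)+1) ^ (1 - a) * ((n.choose k : ℝ) * p ^ k * (1 - p) ^ (n - k) / ((k:ℝ)+1)) := by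
      intro k hk
      have hkp : (0:ℝ) < (k:ℝ) + 1 := by positivity
      have hkn : (k:ℝ) + 1 ≤ (n:ℝ) + 1 := by
        have := mem_range.mp hk
        have : (k:ℝ) ≤ (n:ℝ) := by exact_mod_cast Nat.lt_succ_iff.mp (mem_range.mp hk)
        linarith
      have h1 : 1 / ((k : ℝ) + 1) ^ a ≤ ((n:ℝ)+1) ^ (1 - a) / ((k:ℝ)+1) := by
        rw [div_le_div_iff₀ (by positivity) hkp]
        have : ((k:ℝ)+1) ^ (1 - a) ≤ ((n:ℝ)+1) ^ (1-a) := by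
          apply Real.rpow_le_rpow (le_of_lt hkp) hkn (by linarith)
        calc 1 * ((k:ℝ)+1) = ((k:ℝ)+1) ^ (1 - a) * ((k:ℝ)+1) ^ a := by
              rw [← Real.rpow_add hkp, show (1:ℝ) - a + a = 1 by ring, Real.rpow_one, one_mul]
          _ ≤ ((n:ℝ)+1) ^ (1-a) * ((k:ℝ)+1) ^ a := by
              apply mul_le_mul_of_nonneg_right this (Real.rpow_nonneg (le_of_lt hkp) a)
      have hterm : (0:ℝ) ≤ (n.choose k : ℝ) * p ^ k * (1 - p) ^ (n - k) := by positivity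
      calc (1 / ((k : ℝ) + 1) ^ a) * (n.choose k : ℝ) * p ^ k * (1 - p) ^ (n - k)
          = (1 / ((k : ℝ) + 1) ^ a) * ((n.choose k : ℝ) * p ^ k * (1 - p) ^ (n - k)) := by ring
        _ ≤ (((n:ℝ)+1) ^ (1 - a) / ((k:ℝ)+1)) * ((n.choose k : ℝ) * p ^ k * (1 - p) ^ (n - k)) :=
            mul_le_mul_of_nonneg_right h1 hterm
        _ = ((n:ℝ)+1) ^ (1 - a) * ((n.choose k : ℝ) * p ^ k * (1 - p) ^ (n - k) / ((k:ℝ)+1)) := by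
            ring
    calc (∑ k ∈ range (n + 1),
        (1 / ((k : ℝ) + 1) ^ a) * (n.choose k : ℝ) * p ^ k * (1 - p) ^ (n - k))
        ≤ ∑ k ∈ range (n+1),
            ((n:ℝ)+1) ^ (1 - a) * ((n.choose k : ℝ) * p ^ k * (1 - p) ^ (n - k) / ((k:ℝ)+1)) :=
          sum_le_sum key
      _ = ((n:ℝ)+1) ^ (1 - a) * ((1 - (1 - p) ^ (n + 1)) / (((n : ℝ) + 1) * p)) := by
          rw [← mul_sum, binom_sum_id p hp n]
      _ = 1 / p * ((1 - (1 - p) ^ (n + 1)) / ((n : ℝ) + 1) ^ a) := by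
          have : ((n:ℝ)+1) ^ (1 - a) = ((n:ℝ)+1) / ((n:ℝ)+1) ^ a := by
            rw [eq_div_iff (by positivity), ← Real.rpow_add hnp]
            rw [show (1 : ℝ) - a + a = 1 by ring, Real.rpow_one]
          rw [this]
          have hne : ((n:ℝ)+1) ^ a ≠ 0 := by positivity
          field_simp
  · apply mul_le_mul_of_nonneg_left _ (by positivity)
    apply sum_le_sum
    intro n _
    apply div_le_div_of_nonneg_right _ (by positivity)
    · have : 0 ≤ (1 - p) ^ (n+1) := pow_nonneg hq _
      linarith
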